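/- Let K = F((t)) be the field of formal Laurent series over a field F, O = F[[t]], and let L_1,...,L_n be full-rank O-lattices in K^n. Define A(L_1,...,L_n) = min { val(det(v_1,...,v_n)) : v_i ∈ L_i }. For any full-rank lattice L, setting c(L,L_i) = min over generators w of L of min{λ ∈ ℤ : t^λ w ∈ L_i}, one has val(det(L)) + ∑_{i=1}^n c(L,L_i) ≤ A(L_1,...,L_n). -/

import Mathlib

noncomputable section
open scoped Classical

variable {F : Type*} [Field F] {n : ℕ}

/-- `v` is a basis (over `F[[t]]`) of the full-rank lattice `L` in `K^n`, `K = F((t))`. -/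
def IsLatticeBasis (L : Submodule (PowerSeries F) (Fin n → LaurentSeries F))
    (v : Fin n → Fin n → LaurentSeries F) : Prop :=
  LinearIndependent (LaurentSeries F) v ∧ L = Submodule.span (PowerSeries F) (Set.range v)

/-- `L` is a full-rank `F[[t]]`-lattice in `K^n`. -/
def IsFullLattice (L : Submodule (PowerSeries F) (Fin n → LaurentSeries F)) : Prop :=
  ∃ v, IsLatticeBasis L v

/-- `t^λ` as an element of `K = F((t))`. -/
def tpow (lam : ℤ) : LaurentSeries F := HahnSeries.single lam 1

/-- `val (det L) = d` : the valuation of the determinant of an `O`-basis of `L` is `d`. -/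
def HasValDet (L : Submodule (PowerSeries F) (Fin n → LaurentSeries F)) (d : ℤ) : Prop :=
  ∃ v, IsLatticeBasis L v ∧ (Matrix.of v).det.order = d

/-- `w` is a generator of `L`: it belongs to some `O`-basis of `L`. -/
def IsGen (L : Submodule (PowerSeries F) (Fin n → LaurentSeries F))
    (w : Fin n → LaurentSeries F) : Prop :=
  ∃ v i, IsLatticeBasis L v ∧ v i = w

/-- `c(w, M) = lam`, i.e. `lam = min {μ : t^μ • w ∈ M}`. -/
def CVec (w : Fin n → LaurentSeries F) (M : Submodule (PowerSeries F) (Fin n → LaurentSeries F))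
    (lam : ℤ) : Prop :=
  IsLeast {μ : ℤ | (tpow μ : LaurentSeries F) • w ∈ M} lam

/-- `c(L, M) = c`, i.e. `c` is the minimum of `c(w,M)` over generators `w` of `L`. -/
def CLat (L M : Submodule (PowerSeries F) (Fin n → LaurentSeries F)) (c : ℤ) : Prop :=
  IsLeast {μ : ℤ | ∃ w, IsGen L w ∧ CVec w M μ} c

/-- `A(L_1, ..., L_n) = a` : the minimum of `val (det (v_1, ..., v_n))` over `v_i ∈ L_i`. -/
def AIs (Ls : Fin n → Submodule (PowerSeries F) (Fin n → LaurentSeries F)) (a : ℤ) : Prop :=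
  IsLeast {d : ℤ | ∃ v : Fin n → Fin n → LaurentSeries F,
    (∀ i, v i ∈ Ls i) ∧ (Matrix.of v).det ≠ 0 ∧ (Matrix.of v).det.order = d} a

/-- `x` lies in `t • L`. -/
def MemTL (L : Submodule (PowerSeries F) (Fin n → LaurentSeries F))
    (x : Fin n → LaurentSeries F) : Prop :=
  ∃ y ∈ L, x = (PowerSeries.X : PowerSeries F) • y

end

noncomputable section Aux
open scoped Classical
open HahnSeries

variable {F : Type*} [Field F] {n : ℕ}

local notation "K" => LaurentSeries F
local notation "O" => PowerSeries F
local notation "φ" => HahnSeries.ofPowerSeries ℤ F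

lemma tpow_ne_zero (a : ℤ) : (tpow a : K) ≠ 0 := single_ne_zero one_ne_zero

lemma order_tpow (a : ℤ) : (tpow a : K).order = a := order_single one_ne_zero

lemma tpow_mul_tpow (a b : ℤ) : (tpow a : K) * tpow b = tpow (a + b) := by
  unfold tpow; rw [single_mul_single, one_mul]

lemma tpow_zero' : (tpow 0 : K) = 1 := single_zero_one

lemma tpow_smul_tpow_smul (a b : ℤ) (x : Fin n → K) :
    (tpow a : K) • (tpow b : K) • x = (tpow (a + b) : K) • x := by
  funext i
  simp only [Pi.smul_apply, smul_eq_mul, ← mul_assoc, tpow_mul_tpow]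

lemma tpow_smul_ne_zero {x : Fin n → K} (hx : x ≠ 0) (e : ℤ) : (tpow e : K) • x ≠ 0 := by
  intro h
  apply hx
  have h2 : (tpow (-e) : K) • (tpow e : K) • x = 0 := by rw [h, smul_zero]
  rwa [tpow_smul_tpow_smul, show -e + e = 0 by ring, tpow_zero', one_smul] at h2

lemma algMap_eq (p : O) : algebraMap (PowerSeries F) (LaurentSeries F) p = φ p := by
  rw [LaurentSeries.coe_algebraMap]

lemma psmul_eq (p : O) (y : Fin n → K) : p • y = (φ p : K) • y := by
  rw [← algMap_eq, algebraMap_smul]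

lemma psmul_eq' (p : O) (y : K) : p • y = (φ p : K) * y := by
  rw [Algebra.smul_def, algMap_eq]

lemma order_ofPowerSeries_nonneg (p : O) : 0 ≤ (φ p : K).order := by
  rcases eq_or_ne (φ p : K) 0 with h | h
  · simp [h]
  · by_contra hneg
    push_neg at hneg
    apply coeff_order_eq_zero.not.2 h
    have h2 := PowerSeries.coeff_coe p ((φ p : K).order)
    rw [if_pos hneg] at h2
    exact h2

lemma exists_ofPowerSeries_eq {y : K} (hy : 0 ≤ y.order) : ∃ p : O, (φ p : K) = y := by
  rcases eq_or_ne y 0 with rfl | h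
  · exact ⟨0, map_zero _⟩
  · exact ⟨PowerSeries.X ^ y.order.toNat * y.powerSeriesPart,
      LaurentSeries.X_order_mul_powerSeriesPart (Int.toNat_of_nonneg hy)⟩

lemma isUnit_of_order_eq_zero {p : O} (hp : (φ p : K) ≠ 0) (h0 : (φ p : K).order = 0) :
    IsUnit p := by
  rw [PowerSeries.isUnit_iff_constantCoeff, isUnit_iff_ne_zero]
  intro hc
  apply coeff_order_eq_zero.not.2 hp
  rw [h0]
  have h2 : (φ p : K).coeff ((0 : ℕ) : ℤ) = PowerSeries.coeff 0 p :=
    ofPowerSeries_apply_coeff p 0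
  rw [PowerSeries.coeff_zero_eq_constantCoeff_apply, hc] at h2
  exact_mod_cast h2

lemma tpow_natCast (k : ℕ) : (tpow (k : ℤ) : K) = φ (PowerSeries.X ^ k) := by
  unfold tpow; exact (ofPowerSeries_X_pow k).symm

lemma prod_tpow (s : Finset (Fin n)) (f : Fin n → ℤ) :
    (∏ i ∈ s, (tpow (f i) : K)) = tpow (∑ i ∈ s, f i) := by
  induction s using Finset.induction_on with
  | empty => simp [tpow_zero']
  | insert _ _ h ih => rw [Finset.prod_insert h, Finset.sum_insert h, ih, tpow_mul_tpow]

lemma exists_basis_eq {v : Fin n → Fin n → LaurentSeries F} (hn : 0 < n)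
    (hv : LinearIndependent (LaurentSeries F) v) :
    ∃ B : Module.Basis (Fin n) (LaurentSeries F) (Fin n → LaurentSeries F), ⇑B = v := by
  haveI : Nonempty (Fin n) := Fin.pos_iff_nonempty.mp hn
  exact ⟨basisOfLinearIndependentOfCardEqFinrank hv (by simp),
    coe_basisOfLinearIndependentOfCardEqFinrank _ _⟩

lemma repr_sum (B : Module.Basis (Fin n) (LaurentSeries F) (Fin n → LaurentSeries F))
    (a : Fin n → LaurentSeries F) (j1 : Fin n) :
    B.repr (∑ j, a j • B j) j1 = a j1 := by
  rw [map_sum, Finset.sum_apply']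
  simp [Module.Basis.repr_self, Finsupp.smul_apply, Finsupp.single_apply]

lemma isLatticeBasis_update {L : Submodule (PowerSeries F) (Fin n → LaurentSeries F)}
    {v : Fin n → Fin n → LaurentSeries F} (hv : IsLatticeBasis L v)
    (p : Fin n → PowerSeries F) (j0 : Fin n) (hp : IsUnit (p j0)) :
    IsLatticeBasis L (Function.update v j0 (∑ j, p j • v j)) := by
  obtain ⟨hli, hsp⟩ := hv
  set u : Fin n → K := ∑ j, p j • v j with hu
  set v' := Function.update v j0 u with hv'
  have hn : 0 < n := j0.pos
  obtain ⟨B, hB⟩ := exists_basis_eq hn hli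
  have hu' : u = ∑ j, (φ (p j) : K) • v j := by
    rw [hu]; exact Finset.sum_congr rfl fun j _ => psmul_eq _ _
  have hpj0 : (φ (p j0) : K) ≠ 0 := by
    intro h
    exact hp.ne_zero (ofPowerSeries_injective (by rw [h, map_zero]))
  have hsub : ∀ j, j ≠ j0 → v j ∈ Set.range v' := fun j hj =>
    ⟨j, Function.update_of_ne hj _ _⟩
  have huv' : v' j0 = u := Function.update_self _ _ _
  -- v j0 lies in the K-span of the updated family
  have hj0span : v j0 ∈ Submodule.span (LaurentSeries F) (Set.range v') := by
    have hsum : (φ (p j0) : K) • v j0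
        = u - ∑ j ∈ Finset.univ.erase j0, (φ (p j) : K) • v j := by
      rw [eq_sub_iff_add_eq, hu']
      exact Finset.add_sum_erase Finset.univ (fun j => (φ (p j) : K) • v j) (Finset.mem_univ j0)
    have hmem : (φ (p j0) : K) • v j0 ∈ Submodule.span (LaurentSeries F) (Set.range v') := by
      rw [hsum]
      exact Submodule.sub_mem _ (Submodule.subset_span ⟨j0, huv'⟩)
        (Submodule.sum_mem _ fun j hj => Submodule.smul_mem _ _
          (Submodule.subset_span (hsub j (Finset.ne_of_mem_erase hj))))
    have h2 := Submodule.smul_mem _ ((φ (p j0) : K)⁻¹) hmem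
    have hres : (φ (p j0) : K)⁻¹ • (φ (p j0) : K) • v j0 = v j0 := by
      funext i
      simp only [Pi.smul_apply, smul_eq_mul, ← mul_assoc, inv_mul_cancel₀ hpj0, one_mul]
    rwa [hres] at h2
  have hKtop : ⊤ ≤ Submodule.span (LaurentSeries F) (Set.range v') := by
    rw [← B.span_eq, hB]
    refine Submodule.span_le.mpr ?_
    rintro _ ⟨j, rfl⟩
    by_cases h : j = j0
    · subst h; exact hj0span
    · exact Submodule.subset_span (hsub j h)
  have hcard : Fintype.card (Fin n) = Module.finrank (LaurentSeries F) (Fin n → K) := by simp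
  have hli' : LinearIndependent (LaurentSeries F) v' := by
    have hco := coe_basisOfTopLeSpanOfCardEqFinrank v' hKtop hcard
    exact hco ▸ (basisOfTopLeSpanOfCardEqFinrank v' hKtop hcard).linearIndependent
  refine ⟨hli', le_antisymm ?_ ?_⟩
  · -- L ≤ span O (range v')
    rw [hsp]
    refine Submodule.span_le.mpr ?_
    rintro _ ⟨j, rfl⟩
    by_cases h : j = j0
    · subst h
      obtain ⟨e, he⟩ := hp
      have hsum : p j • v j = u - ∑ k ∈ Finset.univ.erase j, p k • v k := by
        rw [eq_sub_iff_add_eq, hu]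
        exact Finset.add_sum_erase Finset.univ (fun k => p k • v k) (Finset.mem_univ j)
      have hmem : p j • v j ∈ Submodule.span (PowerSeries F) (Set.range v') := by
        rw [hsum]
        exact Submodule.sub_mem _ (Submodule.subset_span ⟨j, huv'⟩)
          (Submodule.sum_mem _ fun k hk => Submodule.smul_mem _ _
            (Submodule.subset_span (hsub k (Finset.ne_of_mem_erase hk))))
      have h2 := Submodule.smul_mem _ ((e⁻¹ : (PowerSeries F)ˣ) : PowerSeries F) hmem
      have hres : ((e⁻¹ : (PowerSeries F)ˣ) : PowerSeries F) • p j • v j = v j := by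
        funext i
        simp only [Pi.smul_apply]
        rw [psmul_eq', psmul_eq', ← mul_assoc, ← map_mul, ← he, Units.inv_mul, map_one, one_mul]
      rwa [hres] at h2
    · exact Submodule.subset_span (hsub j h)
  · -- span O (range v') ≤ L
    refine Submodule.span_le.mpr ?_
    rintro _ ⟨j, rfl⟩
    by_cases h : j = j0
    · subst h
      rw [huv', hu, hsp]
      exact Submodule.sum_mem _ fun k _ => Submodule.smul_mem _ _
        (Submodule.subset_span ⟨k, rfl⟩)
    · rw [hv', Function.update_of_ne h, hsp]
      exact Submodule.subset_span ⟨j, rfl⟩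

/-- `w` is a generator of `L` (aux copy matching pinned def). -/
lemma key_smul_mem {L M : Submodule (PowerSeries F) (Fin n → LaurentSeries F)}
    (hL : IsFullLattice L) (hM : IsFullLattice M) {c : ℤ}
    (hc : IsLeast {μ : ℤ | ∃ w, (∃ v i, IsLatticeBasis L v ∧ v i = w) ∧
      IsLeast {ν : ℤ | (tpow ν : LaurentSeries F) • w ∈ M} μ} c)
    {x : Fin n → LaurentSeries F} (hx : x ∈ M) (hx0 : x ≠ 0) :
    (tpow (-c) : LaurentSeries F) • x ∈ L := by
  have hn : 0 < n := by
    rcases Nat.eq_zero_or_pos n with h | h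
    · exact absurd (by subst h; exact funext fun i => i.elim0) hx0
    · exact h
  obtain ⟨v, hvli, hvsp⟩ := hL
  obtain ⟨B, hB⟩ := exists_basis_eq hn hvli
  have hxa : ∑ j, (B.repr x) j • v j = x := by
    have h := B.sum_repr x
    rwa [hB] at h
  have hS : ∃ j, (B.repr x) j ≠ 0 := by
    by_contra h
    push_neg at h
    apply hx0
    rw [← hxa]
    exact Finset.sum_eq_zero fun j _ => by rw [h j]; exact zero_smul (LaurentSeries F) (v j)
  set S := Finset.univ.filter (fun j => (B.repr x) j ≠ 0) with hSdef
  have hSne : S.Nonempty :=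
    ⟨hS.choose, Finset.mem_filter.mpr ⟨Finset.mem_univ _, hS.choose_spec⟩⟩
  set c' := S.inf' hSne (fun j => ((B.repr x) j).order) with hc'def
  obtain ⟨j0, hj0S, hj0⟩ := Finset.exists_mem_eq_inf' hSne (fun j => ((B.repr x) j).order)
  have hj0ne : (B.repr x) j0 ≠ 0 := (Finset.mem_filter.mp hj0S).2
  have hcoef : ∀ j, ∃ p : PowerSeries F, (φ p : K) = tpow (-c') * (B.repr x) j := by
    intro j
    rcases eq_or_ne ((B.repr x) j) 0 with h | h
    · exact ⟨0, by simp [h]⟩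
    · apply exists_ofPowerSeries_eq
      rw [order_mul (tpow_ne_zero _) h, order_tpow]
      have hle : c' ≤ ((B.repr x) j).order :=
        Finset.inf'_le (fun j => ((B.repr x) j).order)
          (Finset.mem_filter.mpr ⟨Finset.mem_univ _, h⟩)
      omega
  choose p hp using hcoef
  set u : Fin n → K := (tpow (-c') : K) • x with hu
  have hudef : u = ∑ j, p j • v j := by
    rw [hu, ← hxa, Finset.smul_sum]
    refine Finset.sum_congr rfl fun j _ => ?_
    funext i
    simp only [Pi.smul_apply, smul_eq_mul]
    rw [psmul_eq', hp]
    ring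
  have hu0 : u ≠ 0 := tpow_smul_ne_zero hx0 _
  have hφj0 : (φ (p j0) : K) ≠ 0 := by
    rw [hp]
    exact mul_ne_zero (tpow_ne_zero _) hj0ne
  have hordj0 : (φ (p j0) : K).order = 0 := by
    rw [hp, order_mul (tpow_ne_zero _) hj0ne, order_tpow]
    omega
  have hunit : IsUnit (p j0) := isUnit_of_order_eq_zero hφj0 hordj0
  have hgen : ∃ v' i, IsLatticeBasis L v' ∧ v' i = u :=
    ⟨Function.update v j0 u, j0, by
      rw [hudef]
      exact isLatticeBasis_update ⟨hvli, hvsp⟩ p j0 hunit, Function.update_self _ _ _⟩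
  have huL : u ∈ L := by
    rw [hudef, hvsp]
    exact Submodule.sum_mem _ fun j _ => Submodule.smul_mem _ _ (Submodule.subset_span ⟨j, rfl⟩)
  -- the set {μ | t^μ • u ∈ M} has a least element
  have hc'mem : (tpow c' : K) • u ∈ M := by
    rw [hu, tpow_smul_tpow_smul, show c' + -c' = 0 by ring, tpow_zero', one_smul]
    exact hx
  obtain ⟨m, hmli, hmsp⟩ := hM
  obtain ⟨Bm, hBm⟩ := exists_basis_eq hn hmli
  have hdne : ∃ j1, (Bm.repr u) j1 ≠ 0 := by
    by_contra h
    push_neg at h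
    apply hu0
    have hrep := Bm.sum_repr u
    rw [← hrep]
    exact Finset.sum_eq_zero fun j _ => by rw [h j]; exact zero_smul (LaurentSeries F) (Bm j)
  obtain ⟨j1, hj1⟩ := hdne
  have hbdd : ∀ μ : ℤ, (tpow μ : K) • u ∈ M → -((Bm.repr u) j1).order ≤ μ := by
    intro μ hμ
    rw [hmsp, Submodule.mem_span_range_iff_exists_fun] at hμ
    obtain ⟨q, hq⟩ := hμ
    have h1 : Bm.repr ((tpow μ : K) • u) j1 = tpow μ * (Bm.repr u) j1 := by
      rw [map_smul]
      simp [Finsupp.smul_apply, smul_eq_mul]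
    have h2 : Bm.repr ((tpow μ : K) • u) j1 = φ (q j1) := by
      rw [← hq]
      have hrw : ∑ j, q j • m j = ∑ j, (φ (q j) : K) • Bm j := by
        refine Finset.sum_congr rfl fun j _ => ?_
        rw [hBm, psmul_eq]
      rw [hrw, repr_sum]
    have h3 : (0 : ℤ) ≤ (φ (q j1) : K).order := order_ofPowerSeries_nonneg _
    have h4 : (φ (q j1) : K) = tpow μ * (Bm.repr u) j1 := by rw [← h2, h1]
    rw [h4, order_mul (tpow_ne_zero _) hj1, order_tpow] at h3
    omega
  obtain ⟨lam0, hlam0mem, hlam0lb⟩ :=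
    Int.exists_least_of_bdd (P := fun μ => (tpow μ : K) • u ∈ M)
      ⟨-((Bm.repr u) j1).order, hbdd⟩ ⟨c', hc'mem⟩
  have hclam : c ≤ lam0 := hc.2 ⟨u, hgen, hlam0mem, fun z hz => hlam0lb z hz⟩
  have hlamc' : lam0 ≤ c' := hlam0lb c' hc'mem
  have hcc' : c ≤ c' := le_trans hclam hlamc'
  have hmem : ((PowerSeries.X : PowerSeries F) ^ (c' - c).toNat) • u ∈ L :=
    Submodule.smul_mem _ _ huL
  have hEq : ((PowerSeries.X : PowerSeries F) ^ (c' - c).toNat) • u = (tpow (-c) : K) • x := by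
    rw [psmul_eq, ← tpow_natCast, Int.toNat_of_nonneg (by omega), hu, tpow_smul_tpow_smul,
      show c' - c + -c' = -c by ring]
  rwa [hEq] at hmem

end Aux

section Main
open HahnSeries

theorem valDet_add_sum_c_le_A {F : Type*} [Field F] {n : ℕ}
    (Ls : Fin n → Submodule (PowerSeries F) (Fin n → LaurentSeries F))
    (hLs : ∀ i, IsFullLattice (Ls i))
    (L : Submodule (PowerSeries F) (Fin n → LaurentSeries F)) (hL : IsFullLattice L)
    (dL : ℤ) (hdL : HasValDet L dL)
    (c : Fin n → ℤ) (hc : ∀ i, CLat L (Ls i) (c i))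
    (a : ℤ) (ha : AIs Ls a) :
    dL + ∑ i, c i ≤ a := by
  classical
  obtain ⟨w, hwmem, hwdet, hworder⟩ := ha.1
  rcases Nat.eq_zero_or_pos n with hn | hn
  · subst hn
    obtain ⟨v, hvb, hvord⟩ := hdL
    rw [Matrix.det_fin_zero, HahnSeries.order_one] at hvord hworder
    rw [Finset.univ_eq_empty, Finset.sum_empty]
    omega
  · have hw0 : ∀ i, w i ≠ 0 := by
      intro i h
      exact hwdet (Matrix.det_eq_zero_of_row_eq_zero i fun j => by
        show w i j = 0
        rw [h]; rfl)
    have hu : ∀ i, (tpow (-(c i)) : LaurentSeries F) • w i ∈ L := fun i =>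
      key_smul_mem hL (hLs i) (hc i) (hwmem i) (hw0 i)
    obtain ⟨v, ⟨hvli, hvsp⟩, hvord⟩ := hdL
    have hcoef : ∀ i, ∃ b : Fin n → PowerSeries F,
        ∑ j, b j • v j = (tpow (-(c i)) : LaurentSeries F) • w i := by
      intro i
      exact (Submodule.mem_span_range_iff_exists_fun _).mp (hvsp ▸ hu i)
    choose Bmat hBmat using hcoef
    set U : Matrix (Fin n) (Fin n) (LaurentSeries F) :=
      Matrix.of (fun i => (tpow (-(c i)) : LaurentSeries F) • w i) with hU
    have hU1 : U = Matrix.of (fun i j => (tpow (-(c i)) : LaurentSeries F) * (Matrix.of w) i j) := by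
      ext i j
      simp only [hU, Matrix.of_apply, Pi.smul_apply, smul_eq_mul]
    have hdetU : U.det = tpow (∑ i, -(c i)) * (Matrix.of w).det := by
      rw [hU1, Matrix.det_mul_column, prod_tpow]
    have hUeq : U = ((Matrix.of Bmat).map (HahnSeries.ofPowerSeries ℤ F)) * (Matrix.of v) := by
      refine Matrix.ext fun i j' => ?_
      have h := congrFun (hBmat i) j'
      simp only [Finset.sum_apply, Pi.smul_apply] at h
      rw [Matrix.mul_apply]
      simp only [hU, Matrix.of_apply, Matrix.map_apply, Pi.smul_apply]
      rw [← h]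
      exact Finset.sum_congr rfl fun j _ => (psmul_eq' _ _)
    have hdetU2 : U.det
        = (HahnSeries.ofPowerSeries ℤ F ((Matrix.of Bmat).det) : LaurentSeries F)
          * (Matrix.of v).det := by
      rw [hUeq, Matrix.det_mul, RingHom.map_det, RingHom.mapMatrix_apply]
    have hUne : U.det ≠ 0 := by
      rw [hdetU]
      exact mul_ne_zero (tpow_ne_zero _) hwdet
    have hvne : (Matrix.of v).det ≠ 0 := right_ne_zero_of_mul (hdetU2 ▸ hUne)
    have hBne : (HahnSeries.ofPowerSeries ℤ F ((Matrix.of Bmat).det) : LaurentSeries F) ≠ 0 :=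
      left_ne_zero_of_mul (hdetU2 ▸ hUne)
    have h1 : U.det.order = ∑ i, -(c i) + a := by
      rw [hdetU, order_mul (tpow_ne_zero _) hwdet, order_tpow, hworder]
    have h2 : U.det.order
        = (HahnSeries.ofPowerSeries ℤ F ((Matrix.of Bmat).det) : LaurentSeries F).order + dL := by
      rw [hdetU2, order_mul hBne hvne, hvord]
    have h3 := order_ofPowerSeries_nonneg ((Matrix.of Bmat).det)
    have hsum : ∑ i, -(c i) = -∑ i, c i := by
      rw [← Finset.sum_neg_distrib]
    omega

end Main
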